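/- arXiv:2101.12034 — 2 statements merged into one kernel-verified Lean document; each statement's English description precedes it below -/
import Mathlib

section
/- Let E₁ and E₂ be symmetric positive definite k×k real matrices, let √(E₁E₂) denote the principal square root of E₁E₂, and let R be the 2k×2k block matrix with diagonal blocks E₁, E₂, off-diagonal blocks r√(E₁E₂) and r(√(E₁E₂))ᵀ for a real scalar r. Then the Schur complement of the E₂ block satisfies R/E₂ = E₁ - r²(√(E₁E₂))E₂⁻¹(√(E₁E₂))ᵀ = (1 - r²)E₁. -/
open Matrix

open scoped ComplexOrder in
/-- The positive semidefinite square root of a positive semidefinite matrix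
(the definition Mathlib had before it was removed). -/
noncomputable def Matrix.PosSemidef.sqrt {n 𝕜 : Type*} [Fintype n] [RCLike 𝕜] [DecidableEq n]
    {A : Matrix n n 𝕜} (hA : A.PosSemidef) : Matrix n n 𝕜 :=
  (hA.1.eigenvectorUnitary : Matrix n n 𝕜) *
    diagonal ((fun x : ℝ => (x : 𝕜)) ∘ (√·) ∘ hA.1.eigenvalues) *
    (star hA.1.eigenvectorUnitary : Matrix n n 𝕜)

open scoped ComplexOrder in
lemma Matrix.PosSemidef.posSemidef_sqrt {n 𝕜 : Type*} [Fintype n] [RCLike 𝕜] [DecidableEq n]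
    {A : Matrix n n 𝕜} (hA : A.PosSemidef) : hA.sqrt.PosSemidef := by
  have hD : (diagonal ((fun x : ℝ => (x : 𝕜)) ∘ (√·) ∘ hA.1.eigenvalues)).PosSemidef :=
    PosSemidef.diagonal (fun i => by simp [Real.sqrt_nonneg])
  have := hD.mul_mul_conjTranspose_same (hA.1.eigenvectorUnitary : Matrix n n 𝕜)
  unfold Matrix.PosSemidef.sqrt
  convert this using 2
  simp [star_eq_conjTranspose]

open scoped ComplexOrder in
lemma Matrix.PosSemidef.sqrt_mul_self {n 𝕜 : Type*} [Fintype n] [RCLike 𝕜] [DecidableEq n]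
    {A : Matrix n n 𝕜} (hA : A.PosSemidef) : hA.sqrt * hA.sqrt = A := by
  unfold Matrix.PosSemidef.sqrt
  set U := hA.1.eigenvectorUnitary
  have hU : (star U : Matrix n n 𝕜) * (U : Matrix n n 𝕜) = 1 := by simp
  have hD : diagonal ((fun x : ℝ => (x : 𝕜)) ∘ (√·) ∘ hA.1.eigenvalues) *
      diagonal ((fun x : ℝ => (x : 𝕜)) ∘ (√·) ∘ hA.1.eigenvalues) =
      diagonal (RCLike.ofReal ∘ hA.1.eigenvalues) := by
    rw [diagonal_mul_diagonal]
    congr 1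
    funext i
    simp only [Function.comp_apply]
    rw [← RCLike.ofReal_mul, Real.mul_self_sqrt (hA.eigenvalues_nonneg i)]
  calc (U : Matrix n n 𝕜) * diagonal ((fun x : ℝ => (x : 𝕜)) ∘ (√·) ∘ hA.1.eigenvalues) *
        (star U : Matrix n n 𝕜) * ((U : Matrix n n 𝕜) *
        diagonal ((fun x : ℝ => (x : 𝕜)) ∘ (√·) ∘ hA.1.eigenvalues) * (star U : Matrix n n 𝕜))
      = (U : Matrix n n 𝕜) * (diagonal ((fun x : ℝ => (x : 𝕜)) ∘ (√·) ∘ hA.1.eigenvalues) *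
        ((star U : Matrix n n 𝕜) * (U : Matrix n n 𝕜)) *
        diagonal ((fun x : ℝ => (x : 𝕜)) ∘ (√·) ∘ hA.1.eigenvalues)) *
        (star U : Matrix n n 𝕜) := by simp only [Matrix.mul_assoc]
    _ = A := by
      rw [hU, Matrix.mul_one, hD]
      conv_rhs => rw [hA.1.spectral_theorem]
      simp [Unitary.conjStarAlgAut_apply, U]

/-- The principal square root of `E₁ * E₂` for positive definite `E₁, E₂`:
`E₁^{1/2} · (E₁^{1/2} E₂ E₁^{1/2})^{1/2} · E₁^{-1/2}`. -/
noncomputable def principalSqrtMul {k : ℕ} {E₁ E₂ : Matrix (Fin k) (Fin k) ℝ}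
    (h₁ : E₁.PosDef) (h₂ : E₂.PosDef) : Matrix (Fin k) (Fin k) ℝ :=
  h₁.posSemidef.sqrt *
    (h₂.posSemidef.mul_mul_conjTranspose_same h₁.posSemidef.sqrt).sqrt *
    h₁.posSemidef.sqrt⁻¹

lemma key {k : ℕ} {E₁ E₂ : Matrix (Fin k) (Fin k) ℝ}
    (h₁ : E₁.PosDef) (h₂ : E₂.PosDef) :
    principalSqrtMul h₁ h₂ * E₂⁻¹ * (principalSqrtMul h₁ h₂)ᵀ = E₁ := by
  set s := h₁.posSemidef.sqrt with hs
  set M := (h₂.posSemidef.mul_mul_conjTranspose_same h₁.posSemidef.sqrt).sqrt with hM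
  have hs_sym : sᵀ = s := by
    rw [← conjTranspose_eq_transpose_of_trivial]
    exact h₁.posSemidef.posSemidef_sqrt.1
  have hM_sym : Mᵀ = M := by
    rw [← conjTranspose_eq_transpose_of_trivial]
    exact (h₂.posSemidef.mul_mul_conjTranspose_same h₁.posSemidef.sqrt).posSemidef_sqrt.1
  have hss : s * s = E₁ := h₁.posSemidef.sqrt_mul_self
  have hds : s.det ≠ 0 := by
    have h : s.det * s.det = E₁.det := by rw [← det_mul, hss]
    have h2 : s.det * s.det ≠ 0 := by rw [h]; exact h₁.det_pos.ne'
    exact mul_self_ne_zero.mp h2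
  have hMM : M * M = s * E₂ * s := by
    have := (h₂.posSemidef.mul_mul_conjTranspose_same h₁.posSemidef.sqrt).sqrt_mul_self
    rw [this, conjTranspose_eq_transpose_of_trivial, hs_sym]
  have hdM : M.det ≠ 0 := by
    have h : M.det * M.det = s.det * E₂.det * s.det := by
      rw [← det_mul, hMM, det_mul, det_mul]
    have h2 : M.det * M.det ≠ 0 := by
      rw [h]; exact mul_ne_zero (mul_ne_zero hds h₂.det_pos.ne') hds
    exact mul_self_ne_zero.mp h2
  have hinv : s⁻¹ * E₂⁻¹ * s⁻¹ = M⁻¹ * M⁻¹ := by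
    rw [← Matrix.mul_inv_rev, ← Matrix.mul_inv_rev, ← mul_assoc, ← hMM, Matrix.mul_inv_rev]
  show s * M * s⁻¹ * E₂⁻¹ * (s * M * s⁻¹)ᵀ = E₁
  rw [transpose_mul, transpose_mul, transpose_nonsing_inv, hs_sym, hM_sym]
  calc s * M * s⁻¹ * E₂⁻¹ * (s⁻¹ * (M * s))
      = s * M * (s⁻¹ * E₂⁻¹ * s⁻¹) * (M * s) := by noncomm_ring
    _ = s * (M * M⁻¹) * (M⁻¹ * M) * s := by rw [hinv]; noncomm_ring
    _ = E₁ := by rw [mul_nonsing_inv _ hdM.isUnit, nonsing_inv_mul _ hdM.isUnit, mul_one, mul_one, hss]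

/-- The Schur complement of the E₂ block of
`R = [[E₁, r√(E₁E₂)], [r(√(E₁E₂))ᵀ, E₂]]` equals
`E₁ - r²√(E₁E₂)E₂⁻¹(√(E₁E₂))ᵀ = (1 - r²)E₁`. -/
theorem schur_complement_of_pairwise_block (k : ℕ) (E₁ E₂ : Matrix (Fin k) (Fin k) ℝ)
    (h₁ : E₁.PosDef) (h₂ : E₂.PosDef) (r : ℝ) :
    E₁ - (r • principalSqrtMul h₁ h₂) * E₂⁻¹ * (r • principalSqrtMul h₁ h₂)ᵀ
      = E₁ - r ^ 2 • (principalSqrtMul h₁ h₂ * E₂⁻¹ * (principalSqrtMul h₁ h₂)ᵀ) ∧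
    E₁ - (r • principalSqrtMul h₁ h₂) * E₂⁻¹ * (r • principalSqrtMul h₁ h₂)ᵀ
      = (1 - r ^ 2) • E₁ := by
  have h : (r • principalSqrtMul h₁ h₂) * E₂⁻¹ * (r • principalSqrtMul h₁ h₂)ᵀ
      = r ^ 2 • (principalSqrtMul h₁ h₂ * E₂⁻¹ * (principalSqrtMul h₁ h₂)ᵀ) := by
    rw [transpose_smul, smul_mul_assoc, smul_mul_assoc, mul_smul_comm, smul_smul, ← sq]
  refine ⟨by rw [h], ?_⟩
  rw [h, key, sub_smul, one_smul]
end

section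
/- Let σ₁, σ₂ > 0 with σ₁ ≤ σ₂, S = 1/σ₁² + 1/σ₂², Z = 2/(σ₁σ₂). Then on the interval 0 ≤ r < 1, the function g(r) = (S - rZ)/(1 - r²) attains its unique minimum at r = σ₁/σ₂, i.e., the scalar combined variance P(r) = (1-r²)/(S - rZ) is maximized at r_max = min(σ₁/σ₂, σ₂/σ₁). -/
/-- For σ₁ ≤ σ₂, on `0 ≤ r < 1` the function `g(r) = (S - rZ)/(1-r²)` with
`S = 1/σ₁² + 1/σ₂²`, `Z = 2/(σ₁σ₂)` has a unique minimum at `r = σ₁/σ₂`;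
equivalently the combined variance `P(r) = (1-r²)/(S - rZ)` is maximized at
`r_max = min(σ₁/σ₂, σ₂/σ₁)`, with maximal value `min(σ₁², σ₂²)`. -/
theorem scalar_variance_max (σ₁ σ₂ : ℝ) (h₁ : 0 < σ₁) (h₂ : 0 < σ₂) (hle : σ₁ ≤ σ₂) :
    ∀ r : ℝ, 0 ≤ r → r < 1 → r ≠ σ₁ / σ₂ →
      ((1 / σ₁ ^ 2 + 1 / σ₂ ^ 2) - (σ₁ / σ₂) * (2 / (σ₁ * σ₂))) / (1 - (σ₁ / σ₂) ^ 2)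
        < ((1 / σ₁ ^ 2 + 1 / σ₂ ^ 2) - r * (2 / (σ₁ * σ₂))) / (1 - r ^ 2) ∧
      (1 - r ^ 2) / ((1 / σ₁ ^ 2 + 1 / σ₂ ^ 2) - r * (2 / (σ₁ * σ₂)))
        < min (σ₁ ^ 2) (σ₂ ^ 2) := by
  intro r hr0 hr1 hrne
  have h1s : (0:ℝ) < σ₁ ^ 2 := by positivity
  have hr2 : 0 < 1 - r ^ 2 := by nlinarith
  have key : σ₁ ^ 2 * ((1 / σ₁ ^ 2 + 1 / σ₂ ^ 2) - r * (2 / (σ₁ * σ₂))) - (1 - r ^ 2)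
      = (r - σ₁ / σ₂) ^ 2 := by
    field_simp
    ring
  have hq : 0 < (r - σ₁ / σ₂) ^ 2 := by
    have : r - σ₁ / σ₂ ≠ 0 := sub_ne_zero.mpr hrne
    positivity
  have hden : 0 < (1 / σ₁ ^ 2 + 1 / σ₂ ^ 2) - r * (2 / (σ₁ * σ₂)) := by nlinarith
  have hg : 1 / σ₁ ^ 2 < ((1 / σ₁ ^ 2 + 1 / σ₂ ^ 2) - r * (2 / (σ₁ * σ₂))) / (1 - r ^ 2) := by
    rw [div_lt_div_iff₀ h1s hr2]
    nlinarith
  constructor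
  · rcases lt_or_eq_of_le hle with h | h
    · have hL : ((1 / σ₁ ^ 2 + 1 / σ₂ ^ 2) - (σ₁ / σ₂) * (2 / (σ₁ * σ₂))) / (1 - (σ₁ / σ₂) ^ 2)
          = 1 / σ₁ ^ 2 := by
        have hne : σ₂ ^ 2 - σ₁ ^ 2 ≠ 0 := by nlinarith
        rw [div_eq_div_iff]
        · field_simp
          ring
        · have : 1 - (σ₁ / σ₂) ^ 2 = (σ₂ ^ 2 - σ₁ ^ 2) / σ₂ ^ 2 := by
            field_simp
          rw [this]
          positivity
        · exact h1s.ne'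
      rw [hL]; exact hg
    · subst h
      have : (1 : ℝ) - (σ₁ / σ₁) ^ 2 = 0 := by
        rw [div_self h₁.ne']; ring
      rw [this, div_zero]
      positivity
  · have hmin : min (σ₁ ^ 2) (σ₂ ^ 2) = σ₁ ^ 2 :=
      min_eq_left (by nlinarith)
    rw [hmin, div_lt_iff₀ hden]
    nlinarith
end
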